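/- Let S be a complete and decomposable SPN with positive edge weights w and fixed input x. Define node derivative values D_v(x|w) top-down by: D_v = 1 when v is the root of S, and otherwise D_v(x|w) = (sum over sum-node parents u of v of w_{uv} D_u(x|w)) + (sum over product-node parents u of v of D_u(x|w) times the product over children h of u with h not equal to v of f_h(x|w)). Then for every sum node v_i and every child v_j of v_i, the partial derivative of the network polynomial with respect to the weight w_{ij}, viewing f_S(x|w) as a function of the weight vector w, satisfies d f_S(x|w) / d w_{ij} = D_{v_i}(x|w) times f_{v_j}(x|w). -/

import Mathlib

inductive NodeKind
  | sum
  | prod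
  | leaf
deriving DecidableEq

/-- A sum-product network over `N` Boolean variables, with node set `V`:
a rooted DAG (acyclicity witnessed by a rank function) whose leaves are
indicator variables and whose internal nodes are sum or product nodes. -/
structure SPN (V : Type) [Fintype V] [DecidableEq V] (N : ℕ) where
  root : V
  kind : V → NodeKind
  children : V → Finset V
  leaf_children : ∀ v, kind v = NodeKind.leaf → children v = ∅
  internal_nonempty : ∀ v, kind v ≠ NodeKind.leaf → (children v).Nonempty
  root_no_parent : ∀ u, root ∉ children u
  leafVar : V → Fin N
  leafSign : V → Bool
  rank : V → ℕ
  rank_lt : ∀ v, ∀ u ∈ children v, rank u < rank v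

namespace SPN

variable {V : Type} [Fintype V] [DecidableEq V] {N : ℕ}

/-- The value `f_v(·|w)` of every node, where `w` assigns a weight to every
edge `(v,u)` out of a sum node and `L` gives the value of every leaf. -/
noncomputable def evalWith (S : SPN V N) (w : V × V → ℝ) (L : V → ℝ) (v : V) : ℝ :=
  match S.kind v with
  | NodeKind.leaf => L v
  | NodeKind.sum => ∑ u ∈ (S.children v).attach, w (v, u.1) * S.evalWith w L u.1
  | NodeKind.prod => ∏ u ∈ (S.children v).attach, S.evalWith w L u.1
termination_by S.rank v
decreasing_by
  · exact S.rank_lt v u.1 u.2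
  · exact S.rank_lt v u.1 u.2

/-- The leaf values determined by an input `x ∈ {0,1}^N`: the leaf over
variable `X_n` is the indicator `I[x_n = leafSign]`. -/
def ind (S : SPN V N) (x : Fin N → Bool) (v : V) : ℝ :=
  if x (S.leafVar v) = S.leafSign v then 1 else 0

/-- The scope of a node: its variable at a leaf, the union of the scopes of
the children at an internal node. -/
noncomputable def scope (S : SPN V N) (v : V) : Finset (Fin N) :=
  match S.kind v with
  | NodeKind.leaf => {S.leafVar v}
  | NodeKind.sum => (S.children v).attach.sup fun u => S.scope u.1
  | NodeKind.prod => (S.children v).attach.sup fun u => S.scope u.1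
termination_by S.rank v
decreasing_by
  · exact S.rank_lt v u.1 u.2
  · exact S.rank_lt v u.1 u.2

/-- An SPN is complete if all children of every sum node have the same scope. -/
def Complete (S : SPN V N) : Prop :=
  ∀ v, S.kind v = NodeKind.sum →
    ∀ u₁ ∈ S.children v, ∀ u₂ ∈ S.children v, S.scope u₁ = S.scope u₂

/-- An SPN is decomposable if the children of every product node have
pairwise disjoint scopes. -/
def Decomposable (S : SPN V N) : Prop :=
  ∀ v, S.kind v = NodeKind.prod →
    ∀ u₁ ∈ S.children v, ∀ u₂ ∈ S.children v, u₁ ≠ u₂ →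
      Disjoint (S.scope u₁) (S.scope u₂)

/-- `(TV, TE)` is an induced SPN (induced tree) of `S`: a subgraph of `S`,
generated from the root, containing exactly one child of every sum node it
contains and all children of every product node it contains, together with
the corresponding edges. -/
structure IsInducedTree (S : SPN V N) (TV : Finset V) (TE : Finset (V × V)) : Prop where
  root_mem : S.root ∈ TV
  edges_sub : ∀ e ∈ TE, e.1 ∈ TV ∧ e.2 ∈ TV ∧ e.2 ∈ S.children e.1
  reach : ∀ v ∈ TV, v ≠ S.root → ∃ u, (u, v) ∈ TE
  sum_unique : ∀ v ∈ TV, S.kind v = NodeKind.sum → ∃! u, u ∈ S.children v ∧ u ∈ TV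
  sum_edge : ∀ v ∈ TV, S.kind v = NodeKind.sum → ∀ u ∈ S.children v, u ∈ TV → (v, u) ∈ TE
  prod_mem : ∀ v ∈ TV, S.kind v = NodeKind.prod → ∀ u ∈ S.children v, u ∈ TV
  prod_edge : ∀ v ∈ TV, S.kind v = NodeKind.prod → ∀ u ∈ S.children v, (v, u) ∈ TE

end SPN

namespace SPN

variable {V : Type} [Fintype V] [DecidableEq V] {N : ℕ}

lemma eval_leaf (S : SPN V N) (w : V × V → ℝ) (L : V → ℝ) {v : V}
    (h : S.kind v = NodeKind.leaf) : S.evalWith w L v = L v := by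
  rw [evalWith, h]

lemma eval_sum (S : SPN V N) (w : V × V → ℝ) (L : V → ℝ) {v : V}
    (h : S.kind v = NodeKind.sum) :
    S.evalWith w L v = ∑ u ∈ S.children v, w (v, u) * S.evalWith w L u := by
  rw [evalWith, h, ← Finset.sum_attach (S.children v) (fun u => w (v, u) * S.evalWith w L u)]

lemma eval_prod (S : SPN V N) (w : V × V → ℝ) (L : V → ℝ) {v : V}
    (h : S.kind v = NodeKind.prod) :
    S.evalWith w L v = ∏ u ∈ S.children v, S.evalWith w L u := by
  rw [evalWith, h, ← Finset.prod_attach (S.children v) (fun u => S.evalWith w L u)]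

end SPN

namespace SPN

variable {V : Type} [Fintype V] [DecidableEq V] {N : ℕ}

/-- Bottom-up derivative of each node's value with respect to the weight of
edge `e`, evaluated at the current weights `w`. -/
noncomputable def delta (S : SPN V N) (w : V × V → ℝ) (L : V → ℝ) (e : V × V) (v : V) : ℝ :=
  match S.kind v with
  | NodeKind.leaf => 0
  | NodeKind.sum => ∑ u ∈ (S.children v).attach,
      (w (v, u.1) * S.delta w L e u.1 +
        if (v, u.1) = e then S.evalWith w L u.1 else 0)
  | NodeKind.prod => ∑ u ∈ (S.children v).attach,
      S.delta w L e u.1 * ∏ h ∈ (S.children v).erase u.1, S.evalWith w L h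
termination_by S.rank v
decreasing_by
  · exact S.rank_lt v u.1 u.2
  · exact S.rank_lt v u.1 u.2

lemma delta_leaf (S : SPN V N) (w : V × V → ℝ) (L : V → ℝ) (e : V × V) {v : V}
    (h : S.kind v = NodeKind.leaf) : S.delta w L e v = 0 := by
  rw [delta, h]

lemma delta_sum (S : SPN V N) (w : V × V → ℝ) (L : V → ℝ) (e : V × V) {v : V}
    (h : S.kind v = NodeKind.sum) :
    S.delta w L e v = ∑ u ∈ S.children v,
      (w (v, u) * S.delta w L e u + if (v, u) = e then S.evalWith w L u else 0) := by
  rw [delta, h, ← Finset.sum_attach (S.children v)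
    (fun u => w (v, u) * S.delta w L e u + if (v, u) = e then S.evalWith w L u else 0)]

lemma delta_prod (S : SPN V N) (w : V × V → ℝ) (L : V → ℝ) (e : V × V) {v : V}
    (h : S.kind v = NodeKind.prod) :
    S.delta w L e v = ∑ u ∈ S.children v,
      S.delta w L e u * ∏ h ∈ (S.children v).erase u, S.evalWith w L h := by
  rw [delta, h, ← Finset.sum_attach (S.children v)
    (fun u => S.delta w L e u * ∏ h ∈ (S.children v).erase u, S.evalWith w L h)]

lemma hasDerivAt_evalWith (S : SPN V N) (w : V × V → ℝ) (L : V → ℝ) (e : V × V) (v : V) :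
    HasDerivAt (fun t => S.evalWith (Function.update w e t) L v)
      (S.delta w L e v) (w e) := by
  cases hk : S.kind v with
  | leaf =>
      simp only [S.eval_leaf _ L hk, S.delta_leaf w L e hk]
      exact hasDerivAt_const _ _
  | sum =>
      have hrw : ∀ t, S.evalWith (Function.update w e t) L v
          = ∑ u ∈ (S.children v).attach,
              (Function.update w e t) (v, u.1) * S.evalWith (Function.update w e t) L u.1 := by
        intro t
        rw [S.eval_sum _ L hk,
          ← Finset.sum_attach (S.children v)
            (fun u => (Function.update w e t) (v, u) * S.evalWith (Function.update w e t) L u)]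
      simp only [hrw]
      rw [delta, hk]
      apply HasDerivAt.fun_sum
      intro u _
      have ih : HasDerivAt (fun t => S.evalWith (Function.update w e t) L u.1)
          (S.delta w L e u.1) (w e) := S.hasDerivAt_evalWith w L e u.1
      have hw : HasDerivAt (fun t => (Function.update w e t) (v, u.1))
          (if (v, u.1) = e then 1 else 0) (w e) := by
        by_cases hc : (v, u.1) = e
        · rw [if_pos hc]
          have hfun : (fun t => Function.update w e t (v, u.1)) = fun t : ℝ => t := by
            funext t; rw [hc, Function.update_self]
          rw [hfun]; exact hasDerivAt_id (w e)
        · simp only [Function.update_of_ne hc, if_neg hc]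
          exact hasDerivAt_const _ _
      have := hw.fun_mul ih
      simp only [Function.update_eq_self] at this
      refine this.congr_deriv ?_
      by_cases hc : (v, u.1) = e <;> simp [hc] <;> ring
  | prod =>
      have hrw : ∀ t, S.evalWith (Function.update w e t) L v
          = ∏ u ∈ S.children v, S.evalWith (Function.update w e t) L u := fun t =>
        S.eval_prod _ L hk
      simp only [hrw]
      rw [S.delta_prod w L e hk]
      have := HasDerivAt.fun_finset_prod
        (u := S.children v)
        (f := fun u t => S.evalWith (Function.update w e t) L u)
        (f' := fun u => S.delta w L e u)
        (fun u hu => S.hasDerivAt_evalWith w L e u)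
      simp only [Function.update_eq_self, smul_eq_mul] at this
      refine this.congr_deriv ?_
      exact Finset.sum_congr rfl fun u _ => mul_comm _ _
termination_by S.rank v
decreasing_by
  · exact S.rank_lt v u.1 u.2
  · exact S.rank_lt v u hu

end SPN

namespace SPN

variable {V : Type} [Fintype V] [DecidableEq V] {N : ℕ}

/-- The coefficient of child `c`'s value in the value of node `u`. -/
noncomputable def Mcoef (S : SPN V N) (w : V × V → ℝ) (L : V → ℝ) (u c : V) : ℝ :=
  if c ∈ S.children u then
    (if S.kind u = NodeKind.sum then w (u, c)
     else if S.kind u = NodeKind.prod then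
       ∏ h ∈ (S.children u).erase c, S.evalWith w L h
     else 0)
  else 0

lemma Mcoef_root (S : SPN V N) (w : V × V → ℝ) (L : V → ℝ) (u : V) :
    S.Mcoef w L u S.root = 0 := by
  simp [Mcoef, S.root_no_parent u]

/-- Bottom-up recursion for `delta` in terms of `Mcoef`. -/
lemma delta_eq_sum_Mcoef (S : SPN V N) (w : V × V → ℝ) (L : V → ℝ)
    (vi vj : V) (hsum : S.kind vi = NodeKind.sum) (hj : vj ∈ S.children vi) (v : V) :
    S.delta w L (vi, vj) v =
      (∑ c : V, S.Mcoef w L v c * S.delta w L (vi, vj) c) +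
        (if v = vi then S.evalWith w L vj else 0) := by
  have hchil : ∀ (g : V → ℝ), (∑ c ∈ S.children v, g c)
      = ∑ c : V, (if c ∈ S.children v then g c else 0) := by
    intro g
    rw [Finset.sum_ite_mem, Finset.univ_inter]
  cases hk : S.kind v with
  | leaf =>
      have hne : v ≠ vi := by intro h; rw [h, hsum] at hk; exact absurd hk (by simp)
      have hch : S.children v = ∅ := S.leaf_children v hk
      simp [S.delta_leaf w L _ hk, Mcoef, hch, hne]
  | sum =>
      rw [S.delta_sum w L _ hk, Finset.sum_add_distrib]
      congr 1
      · rw [hchil (fun c => w (v, c) * S.delta w L (vi, vj) c)]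
        apply Finset.sum_congr rfl
        intro c _
        by_cases hc : c ∈ S.children v <;> simp [Mcoef, hc, hk]
      · by_cases hv : v = vi
        · subst hv
          rw [if_pos rfl]
          have : ∀ c ∈ S.children v, (if (v, c) = (v, vj) then S.evalWith w L c else 0)
              = if c = vj then S.evalWith w L c else 0 := by
            intro c _; simp [Prod.ext_iff]
          rw [Finset.sum_congr rfl this, Finset.sum_ite_eq' (S.children v) vj]
          rw [if_pos hj]
        · rw [if_neg hv]
          apply Finset.sum_eq_zero
          intro c _
          rw [if_neg]
          intro h
          exact hv (congrArg Prod.fst h)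
  | prod =>
      have hne : v ≠ vi := by intro h; rw [h, hsum] at hk; exact absurd hk (by simp)
      rw [S.delta_prod w L _ hk, if_neg hne, add_zero,
        hchil (fun c => S.delta w L (vi, vj) c * ∏ h ∈ (S.children v).erase c, S.evalWith w L h)]
      apply Finset.sum_congr rfl
      intro c _
      by_cases hc : c ∈ S.children v <;> simp [Mcoef, hc, hk, mul_comm]

lemma delta_root_eq (S : SPN V N) (w : V × V → ℝ) (L : V → ℝ) (Dv : V → ℝ)
    (hDroot : Dv S.root = 1)
    (hDrec : ∀ v, v ≠ S.root → Dv v =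
      (∑ u ∈ Finset.univ.filter
          (fun u => S.kind u = NodeKind.sum ∧ v ∈ S.children u),
        w (u, v) * Dv u) +
      ∑ u ∈ Finset.univ.filter
          (fun u => S.kind u = NodeKind.prod ∧ v ∈ S.children u),
        Dv u * ∏ h ∈ (S.children u).erase v, S.evalWith w L h)
    (vi vj : V) (hsum : S.kind vi = NodeKind.sum) (hj : vj ∈ S.children vi) :
    S.delta w L (vi, vj) S.root = Dv vi * S.evalWith w L vj := by
  set d := S.delta w L (vi, vj) with hd
  set f := S.evalWith w L with hf
  set M := S.Mcoef w L with hM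
  -- B2 : adjoint recursion for Dv
  have B2 : ∀ c, c ≠ S.root → (∑ u : V, M u c * Dv u) = Dv c := by
    intro c hc
    rw [hDrec c hc]
    have hpt : ∀ u : V, M u c * Dv u =
        (if S.kind u = NodeKind.sum ∧ c ∈ S.children u then w (u, c) * Dv u else 0) +
        (if S.kind u = NodeKind.prod ∧ c ∈ S.children u then
          Dv u * ∏ h ∈ (S.children u).erase c, f h else 0) := by
      intro u
      by_cases hm : c ∈ S.children u
      · cases hk : S.kind u <;> simp [hM, Mcoef, hm, hk] <;> ring
      · simp [hM, Mcoef, hm]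
    rw [Finset.sum_congr rfl (fun u _ => hpt u), Finset.sum_add_distrib,
      ← Finset.sum_filter, ← Finset.sum_filter]
  -- main computation
  have key : (∑ v : V, Dv v * d v) =
      (∑ c : V, (∑ u : V, M u c * Dv u) * d c) + Dv vi * f vj := by
    have step1 : (∑ v : V, Dv v * d v) =
        (∑ v : V, ∑ c : V, Dv v * (M v c * d c)) +
          ∑ v : V, Dv v * (if v = vi then f vj else 0) := by
      rw [← Finset.sum_add_distrib]
      apply Finset.sum_congr rfl
      intro v _
      rw [hd, S.delta_eq_sum_Mcoef w L vi vj hsum hj v, ← hd, ← hM, ← hf]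
      rw [mul_add, Finset.mul_sum]
    rw [step1, Finset.sum_comm]
    congr 1
    · apply Finset.sum_congr rfl
      intro c _
      rw [Finset.sum_mul]
      apply Finset.sum_congr rfl
      intro v _
      ring
    · have : ∀ v : V, Dv v * (if v = vi then f vj else 0)
          = if v = vi then Dv vi * f vj else 0 := by
        intro v
        by_cases hv : v = vi <;> simp [hv]
      rw [Finset.sum_congr rfl (fun v _ => this v), Finset.sum_ite_eq' Finset.univ vi,
        if_pos (Finset.mem_univ vi)]
  -- split off the root on both sides
  have lhs_split : (∑ v : V, Dv v * d v)
      = Dv S.root * d S.root + ∑ v ∈ Finset.univ.erase S.root, Dv v * d v :=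
    (Finset.add_sum_erase _ _ (Finset.mem_univ S.root)).symm
  have rhs_split : (∑ c : V, (∑ u : V, M u c * Dv u) * d c)
      = ∑ c ∈ Finset.univ.erase S.root, Dv c * d c := by
    rw [← Finset.add_sum_erase _ _ (Finset.mem_univ S.root)]
    have hroot0 : (∑ u : V, M u S.root * Dv u) = 0 := by
      apply Finset.sum_eq_zero
      intro u _
      rw [hM, S.Mcoef_root w L u, zero_mul]
    rw [hroot0, zero_mul, zero_add]
    apply Finset.sum_congr rfl
    intro c hc
    rw [B2 c (Finset.ne_of_mem_erase hc)]
  rw [lhs_split, rhs_split] at key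
  rw [hDroot, one_mul] at key
  linarith

end SPN

/-- Let `S` be a complete and decomposable SPN with positive
edge weights `w` and fixed input `x`, and let `Dv` be the node derivative
values, defined top-down by `Dv root = 1` and, for `v ≠ root`,
`Dv v = ∑_{sum parents u} w (u,v) * Dv u +
        ∑_{product parents u} Dv u * ∏_{h ∈ children u, h ≠ v} f_h(x|w)`.
Then for every sum node `v_i` and child `v_j`, the partial derivative of the
network polynomial with respect to the weight `w (v_i, v_j)` equals
`Dv v_i * f_{v_j}(x|w)`. -/
theorem network_polynomial_partial_derivative
    {V : Type} [Fintype V] [DecidableEq V] {N : ℕ} (S : SPN V N)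
    (hC : S.Complete) (hD : S.Decomposable)
    (w : V × V → ℝ) (hw : ∀ e, 0 < w e) (x : Fin N → Bool)
    (Dv : V → ℝ)
    (hDroot : Dv S.root = 1)
    (hDrec : ∀ v, v ≠ S.root → Dv v =
      (∑ u ∈ Finset.univ.filter
          (fun u => S.kind u = NodeKind.sum ∧ v ∈ S.children u),
        w (u, v) * Dv u) +
      ∑ u ∈ Finset.univ.filter
          (fun u => S.kind u = NodeKind.prod ∧ v ∈ S.children u),
        Dv u * ∏ h ∈ (S.children u).erase v, S.evalWith w (S.ind x) h) :
    ∀ vi vj, S.kind vi = NodeKind.sum → vj ∈ S.children vi →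
      HasDerivAt
        (fun t : ℝ =>
          S.evalWith (Function.update w (vi, vj) t) (S.ind x) S.root)
        (Dv vi * S.evalWith w (S.ind x) vj) (w (vi, vj)) := by
  intro vi vj hsum hj
  have h := S.hasDerivAt_evalWith w (S.ind x) (vi, vj) S.root
  rwa [S.delta_root_eq w (S.ind x) Dv hDroot hDrec vi vj hsum hj] at h
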